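/- For all integers n ≥ 1 and a1, b, a2 ≥ 0, H*_n({2}^{a1},1,{2}^b,3,{2}^{a2},1) = 2·∑_{k=1}^{n} C(n,k)/(k^{2(a1+b+a2)+5}·C(n+k,k)) + 4·∑_{k=1}^{n} H_{k-1}(2b+2a2+4)·C(n,k)/(k^{2a1+1}·C(n+k,k)) + 4·∑_{k=1}^{n} (-1)^k·H_{k-1}(-(2a2+2))·C(n,k)/(k^{2a1+2b+3}·C(n+k,k)) + 8·∑_{k=1}^{n} H_{k-1}(-(2b+2), -(2a2+2))·C(n,k)/(k^{2a1+1}·C(n+k,k)). -/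

import Mathlib

open Finset

/-- Sign factor for an alternating multiple harmonic sum entry. -/
def aSgn (s : ℤ) : ℚ := if 0 < s then 1 else -1

/-- Alternating multiple harmonic sum `H_n(s₁,…,s_ℓ)` (strict indices). -/
def Hh : ℕ → List ℤ → ℚ
  | _, [] => 1
  | n, s :: r => ∑ k ∈ Finset.Icc 1 n, aSgn s ^ k / (k : ℚ) ^ s.natAbs * Hh (k - 1) r

/-- Alternating multiple harmonic star sum `H*_n(s₁,…,s_ℓ)` (weak indices). -/
def Hstar : ℕ → List ℤ → ℚ
  | _, [] => 1
  | n, s :: r => ∑ k ∈ Finset.Icc 1 n, aSgn s ^ k / (k : ℚ) ^ s.natAbs * Hstar k r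

/-- All compositions (ordered tuples of positive integers) of `w`. -/
def comps : ℕ → List (List ℕ)
  | 0 => [[]]
  | (w+1) => (List.range (w+1)).flatMap (fun j => (comps (w - j)).map (fun l => (j+1) :: l))
decreasing_by simp_wf <;> omega

/-- Coerce a list of naturals to a list of integers. -/
def natList (l : List ℕ) : List ℤ := l.map (fun m => (m : ℤ))

lemma Hstar_nil (n : ℕ) : Hstar n [] = 1 := rfl

lemma Hh_nil (n : ℕ) : Hh n [] = 1 := rfl

lemma Hstar_one (n : ℕ) (L : List ℤ) :
    Hstar n ((1:ℤ) :: L) = ∑ m ∈ Icc 1 n, 1/(m:ℚ) * Hstar m L := by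
  rw [Hstar]
  refine Finset.sum_congr rfl fun m _ => ?_
  norm_num [aSgn]

lemma Hstar_two (n : ℕ) (L : List ℤ) :
    Hstar n ((2:ℤ) :: L) = ∑ m ∈ Icc 1 n, 1/(m:ℚ)^2 * Hstar m L := by
  rw [Hstar]
  refine Finset.sum_congr rfl fun m _ => ?_
  norm_num [aSgn]

lemma Hstar_three (n : ℕ) (L : List ℤ) :
    Hstar n ((3:ℤ) :: L) = ∑ m ∈ Icc 1 n, 1/(m:ℚ)^3 * Hstar m L := by
  rw [Hstar]
  refine Finset.sum_congr rfl fun m _ => ?_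
  norm_num [aSgn]

lemma Hh_pos (m e : ℕ) (he : 0 < e) (L : List ℤ) :
    Hh m ((e:ℤ) :: L) = ∑ j ∈ Icc 1 m, (1/(j:ℚ)^e) * Hh (j-1) L := by
  rw [Hh]
  refine Finset.sum_congr rfl fun j _ => ?_
  rw [aSgn, if_pos (by exact_mod_cast he)]
  norm_num

lemma Hh_neg (m e : ℕ) (L : List ℤ) :
    Hh m (-(e:ℤ) :: L) = ∑ j ∈ Icc 1 m, ((-1:ℚ)^j/(j:ℚ)^e) * Hh (j-1) L := by
  rw [Hh]
  refine Finset.sum_congr rfl fun j _ => ?_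
  rw [aSgn, if_neg (by omega)]
  norm_num


noncomputable def Aq (n k : ℕ) : ℚ := (n.choose k : ℚ) / ((n+k).choose k : ℚ)

lemma chq_ne (n k : ℕ) : (((n+k).choose k : ℕ) : ℚ) ≠ 0 := by
  have h := Nat.choose_pos (Nat.le_add_left k n)
  exact_mod_cast h.ne'

lemma Aq_of_lt {n k : ℕ} (h : n < k) : Aq n k = 0 := by
  simp [Aq, Nat.choose_eq_zero_of_lt h]

lemma Aq_zero (n : ℕ) : Aq n 0 = 1 := by simp [Aq]

/-- key recurrence in n -/
lemma F1 (n k : ℕ) : ((n:ℚ)+1)^2 * Aq n k = (((n:ℚ)+1)^2 - (k:ℚ)^2) * Aq (n+1) k := by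
  rcases le_or_gt k n with h | h
  · have h1n := Nat.choose_mul_succ_eq n k
    have h2n := Nat.choose_mul_succ_eq (n+k) k
    have h1 : (n.choose k : ℚ) * ((n:ℚ)+1) = ((n+1).choose k : ℚ) * ((n:ℚ)+1-(k:ℚ)) := by
      have := congrArg (fun x : ℕ => (x : ℚ)) h1n
      push_cast [Nat.cast_sub (show k ≤ n+1 by omega)] at this
      linarith
    have h2 : ((n+k).choose k : ℚ) * ((n:ℚ)+1+(k:ℚ)) = (((n+1)+k).choose k : ℚ) * ((n:ℚ)+1) := by
      have := congrArg (fun x : ℕ => (x : ℚ)) h2n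
      have e : n + k + 1 - k = n + 1 := by omega
      rw [e] at this
      have e2 : n + 1 + k = n + k + 1 := by omega
      rw [e2]
      push_cast at this
      linarith
    rw [Aq, Aq]
    field_simp [chq_ne]
    rw [div_eq_div_iff (chq_ne n k) (chq_ne (n+1) k)]
    linear_combination (((n:ℚ)+1) * (((n+1)+k).choose k : ℚ)) * h1
      - (((n:ℚ)+1-(k:ℚ)) * ((n+1).choose k : ℚ)) * h2
  · rcases eq_or_lt_of_le (Nat.succ_le_of_lt h) with h' | h'
    · have hk : (k:ℚ) = (n:ℚ)+1 := by exact_mod_cast congrArg (fun x : ℕ => (x:ℚ)) h'.symm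
      rw [Aq_of_lt h, hk]
      ring
    · rw [Aq_of_lt h, Aq_of_lt h', mul_zero, mul_zero]

/-- key recurrence in k -/
lemma F2 (n j : ℕ) : ((n:ℚ)+(j:ℚ)+1) * Aq n (j+1) = ((n:ℚ)-(j:ℚ)) * Aq n j := by
  rcases lt_or_ge j n with h | h
  · have h1n := Nat.choose_succ_right_eq n j
    have h1 : (n.choose (j+1) : ℚ) * ((j:ℚ)+1) = (n.choose j : ℚ) * ((n:ℚ)-(j:ℚ)) := by
      have := congrArg (fun x : ℕ => (x : ℚ)) h1n
      push_cast [Nat.cast_sub (le_of_lt h)] at this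
      linarith
    have h2n := Nat.add_one_mul_choose_eq (n+j) j
    have h2 : ((n:ℚ)+(j:ℚ)+1) * ((n+j).choose j : ℚ) = (((n+j)+1).choose (j+1) : ℚ) * ((j:ℚ)+1) := by
      have := congrArg (fun x : ℕ => (x : ℚ)) h2n
      push_cast at this
      linarith
    have e : n + (j+1) = (n+j)+1 := rfl
    have hne := chq_ne n (j+1)
    rw [e] at hne
    rw [Aq, Aq, e]
    field_simp [chq_ne n j, hne]
    linear_combination ((((n+j)+1).choose (j+1) : ℚ)) * h1 + ((n.choose (j+1) : ℚ)) * h2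
  · rcases eq_or_lt_of_le h with h' | h'
    · subst h'
      rw [Aq_of_lt (Nat.lt_succ_self n)]
      simp
    · rw [Aq_of_lt h', Aq_of_lt (by omega), mul_zero, mul_zero]

lemma F2s (n d : ℕ) (hd : d+1 ≤ n) :
    (2*(n:ℚ)-(d:ℚ))*Aq n (n-d) = ((d:ℚ)+1)*Aq n (n-(d+1)) := by
  have hf := F2 n (n-(d+1))
  have e2 : n-(d+1)+1 = n-d := by omega
  rw [e2] at hf
  have c1 : ((n-(d+1):ℕ):ℚ) = (n:ℚ)-(d:ℚ)-1 := by
    push_cast [Nat.cast_sub hd]; ring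
  rw [c1] at hf
  linear_combination hf

lemma K1aux (n : ℕ) : ∀ d, d ≤ n →
    2*∑ j ∈ Icc (n-d+1) n, (j:ℚ)*Aq n j = (d:ℚ)*Aq n (n-d) := by
  intro d
  induction d with
  | zero =>
    intro _
    rw [Nat.sub_zero, Finset.Icc_eq_empty (by omega)]
    simp
  | succ d ih =>
    intro hd
    have hdn : d ≤ n := by omega
    have e1 : n - (d+1) + 1 = n - d := by omega
    rw [e1, ← Finset.Ioc_insert_left (Nat.sub_le n d),
      Finset.sum_insert Finset.left_notMem_Ioc, ← Finset.Icc_add_one_left_eq_Ioc]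
    have c2 : ((n-d:ℕ):ℚ) = (n:ℚ)-(d:ℚ) := by push_cast [Nat.cast_sub hdn]; ring
    rw [mul_add, ih hdn, c2]
    push_cast
    linear_combination F2s n d hd

lemma K3aux (n : ℕ) : ∀ d, d ≤ n →
    2*(n:ℚ)*∑ j ∈ Icc (n-d+1) n, (-1:ℚ)^j*Aq n j
      = (-1:ℚ)^(n-d) * (-(d:ℚ)) * Aq n (n-d) := by
  intro d
  induction d with
  | zero =>
    intro _
    rw [Nat.sub_zero, Finset.Icc_eq_empty (by omega)]
    simp
  | succ d ih =>
    intro hd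
    have hdn : d ≤ n := by omega
    have e1 : n - (d+1) + 1 = n - d := by omega
    rw [e1, ← Finset.Ioc_insert_left (Nat.sub_le n d),
      Finset.sum_insert Finset.left_notMem_Ioc, ← Finset.Icc_add_one_left_eq_Ioc]
    rw [mul_add, ih hdn]
    have hp : (-1:ℚ)^(n-d) = (-1:ℚ)^(n-(d+1)) * (-1) := by
      rw [← pow_succ]
      congr 1
      omega
    rw [hp]
    push_cast
    linear_combination (-(-1:ℚ)^(n-(d+1))) * F2s n d hd

lemma K1'' (n k : ℕ) (h : k ≤ n) :
    2*∑ j ∈ Icc (k+1) n, (j:ℚ)*Aq n j = ((n:ℚ)-(k:ℚ))*Aq n k := by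
  have := K1aux n (n-k) (Nat.sub_le n k)
  have e1 : n-(n-k) = k := by omega
  have e2 : n-(n-k)+1 = k+1 := by omega
  rw [e1, Nat.cast_sub h] at this
  exact this

lemma K3'' (n k : ℕ) (h : k ≤ n) :
    2*(n:ℚ)*∑ j ∈ Icc (k+1) n, (-1:ℚ)^j*Aq n j = (-1:ℚ)^k*((k:ℚ)-(n:ℚ))*Aq n k := by
  have := K3aux n (n-k) (Nat.sub_le n k)
  have e1 : n-(n-k) = k := by omega
  rw [e1, Nat.cast_sub h] at this
  rw [this]
  ring

lemma K2 (k : ℕ) (hk : 1 ≤ k) : ∀ n, ∑ m ∈ Icc k n, Aq m k/(m:ℚ)^2 = Aq n k/(k:ℚ)^2 := by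
  intro n
  induction n with
  | zero =>
    rw [Finset.Icc_eq_empty (by omega), Aq_of_lt hk]
    simp
  | succ n ih =>
    rcases le_or_gt k (n+1) with h | h
    · rw [Finset.sum_Icc_succ_top h, ih]
      have hf := F1 n k
      have hk0 : (k:ℚ) ≠ 0 := by have : 0 < k := hk; exact_mod_cast this.ne'
      have hn1 : ((n:ℚ)+1) ≠ 0 := by positivity
      push_cast
      field_simp
      linear_combination hf
    · rw [Finset.Icc_eq_empty (by omega), Aq_of_lt h]
      simp

lemma K1 (k : ℕ) (hk : 1 ≤ k) : ∀ n, ∑ m ∈ Icc k n, Aq m k/(m:ℚ)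
    = Aq n k/(k:ℚ) + 2*∑ j ∈ Icc (k+1) n, Aq n j/(j:ℚ) := by
  intro n
  induction n with
  | zero =>
    rw [Finset.Icc_eq_empty (by omega), Finset.Icc_eq_empty (by omega), Aq_of_lt hk]
    simp
  | succ n ih =>
    rcases lt_or_ge (n+1) k with h | h
    · rw [Finset.Icc_eq_empty (by omega), Finset.Icc_eq_empty (by omega), Aq_of_lt h]
      simp
    rcases eq_or_lt_of_le h with h' | h'
    · subst h'
      rw [Finset.Icc_self, Finset.sum_singleton, Finset.Icc_eq_empty (by omega)]
      simp
    have hkn : k ≤ n := by omega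
    rw [Finset.sum_Icc_succ_top (by omega : k ≤ n+1), ih,
      Finset.sum_Icc_succ_top (by omega : k+1 ≤ n+1)]
    have hrw : ∑ j ∈ Icc (k+1) n, Aq (n+1) j/(j:ℚ)
        = ∑ j ∈ Icc (k+1) n, (Aq n j/(j:ℚ) + ((j:ℚ)*Aq (n+1) j)/((n:ℚ)+1)^2) := by
      refine Finset.sum_congr rfl fun j hj => ?_
      have hj1 : 1 ≤ j := by have := (Finset.mem_Icc.1 hj).1; omega
      have hj0 : (j:ℚ) ≠ 0 := by have : 0 < j := hj1; exact_mod_cast this.ne'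
      have hn1 : ((n:ℚ)+1) ≠ 0 := by positivity
      have hf := F1 n j
      field_simp
      linear_combination (-1:ℚ) * hf
    rw [hrw, Finset.sum_add_distrib, ← Finset.sum_div]
    have hK := K1'' (n+1) k (by omega)
    rw [Finset.sum_Icc_succ_top (by omega : k+1 ≤ n+1)] at hK
    push_cast at hK ⊢
    have hf := F1 n k
    have hk0 : (k:ℚ) ≠ 0 := by have : 0 < k := hk; exact_mod_cast this.ne'
    have hn1 : ((n:ℚ)+1) ≠ 0 := by positivity
    field_simp
    linear_combination hf - (k:ℚ) * hK

lemma K3 (k : ℕ) (hk : 1 ≤ k) : ∀ n, ∑ m ∈ Icc k n, Aq m k/(m:ℚ)^3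
    = Aq n k/(k:ℚ)^3 + (2*(-1:ℚ)^k/(k:ℚ))*∑ j ∈ Icc (k+1) n, (-1:ℚ)^j*Aq n j/(j:ℚ)^2 := by
  intro n
  induction n with
  | zero =>
    rw [Finset.Icc_eq_empty (by omega), Finset.Icc_eq_empty (by omega), Aq_of_lt hk]
    simp
  | succ n ih =>
    rcases lt_or_ge (n+1) k with h | h
    · rw [Finset.Icc_eq_empty (by omega), Finset.Icc_eq_empty (by omega), Aq_of_lt h]
      simp
    rcases eq_or_lt_of_le h with h' | h'
    · subst h'
      rw [Finset.Icc_self, Finset.sum_singleton, Finset.Icc_eq_empty (by omega)]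
      simp
    have hkn : k ≤ n := by omega
    rw [Finset.sum_Icc_succ_top (by omega : k ≤ n+1), ih,
      Finset.sum_Icc_succ_top (by omega : k+1 ≤ n+1)]
    have hrw : ∑ j ∈ Icc (k+1) n, (-1:ℚ)^j*Aq (n+1) j/(j:ℚ)^2
        = ∑ j ∈ Icc (k+1) n, ((-1:ℚ)^j*Aq n j/(j:ℚ)^2 + ((-1:ℚ)^j*Aq (n+1) j)/((n:ℚ)+1)^2) := by
      refine Finset.sum_congr rfl fun j hj => ?_
      have hj1 : 1 ≤ j := by have := (Finset.mem_Icc.1 hj).1; omega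
      have hj0 : (j:ℚ) ≠ 0 := by have : 0 < j := hj1; exact_mod_cast this.ne'
      have hn1 : ((n:ℚ)+1) ≠ 0 := by positivity
      have hf := F1 n j
      field_simp
      linear_combination (-1:ℚ) * hf
    rw [hrw, Finset.sum_add_distrib, ← Finset.sum_div]
    have hK := K3'' (n+1) k (by omega)
    rw [Finset.sum_Icc_succ_top (by omega : k+1 ≤ n+1)] at hK
    push_cast at hK ⊢
    have hf := F1 n k
    have hk0 : (k:ℚ) ≠ 0 := by have : 0 < k := hk; exact_mod_cast this.ne'
    have hn1 : ((n:ℚ)+1) ≠ 0 := by positivity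
    have hx : ((-1:ℚ)^k)*((-1:ℚ)^k) = 1 := by
      rw [← pow_add, ← two_mul, pow_mul]
      norm_num
    field_simp
    linear_combination ((n:ℚ)+1) * hf
      - ((k:ℚ)^2*(-1:ℚ)^k) * hK
      + ((k:ℚ)^2*(((n:ℚ)+1)-(k:ℚ))*Aq (n+1) k) * hx

lemma B0 : ∀ n : ℕ, ∑ m ∈ Icc 1 n, 1/(m:ℚ) = 2*∑ j ∈ Icc 1 n, Aq n j/(j:ℚ) := by
  intro n
  induction n with
  | zero => simp
  | succ n ih =>
    rw [Finset.sum_Icc_succ_top (by omega : 1 ≤ n+1), ih,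
      Finset.sum_Icc_succ_top (by omega : 1 ≤ n+1)]
    have hrw : ∑ j ∈ Icc 1 n, Aq (n+1) j/(j:ℚ)
        = ∑ j ∈ Icc 1 n, (Aq n j/(j:ℚ) + ((j:ℚ)*Aq (n+1) j)/((n:ℚ)+1)^2) := by
      refine Finset.sum_congr rfl fun j hj => ?_
      have hj1 : 1 ≤ j := by have := (Finset.mem_Icc.1 hj).1; omega
      have hj0 : (j:ℚ) ≠ 0 := by have : 0 < j := hj1; exact_mod_cast this.ne'
      have hn1 : ((n:ℚ)+1) ≠ 0 := by positivity
      have hf := F1 n j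
      field_simp
      linear_combination (-1:ℚ) * hf
    rw [hrw, Finset.sum_add_distrib, ← Finset.sum_div]
    have hK := K1'' (n+1) 0 (by omega)
    rw [Aq_zero, Finset.sum_Icc_succ_top (by omega : 0+1 ≤ n+1)] at hK
    push_cast at hK ⊢
    have hn1 : ((n:ℚ)+1) ≠ 0 := by positivity
    field_simp
    linear_combination (-1:ℚ) * hK

lemma swap1 (n : ℕ) (f : ℕ → ℕ → ℚ) :
    ∑ m ∈ Icc 1 n, ∑ k ∈ Icc 1 m, f m k = ∑ k ∈ Icc 1 n, ∑ m ∈ Icc k n, f m k :=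
  Finset.sum_comm' (by intro x y; simp only [Finset.mem_Icc]; omega)

lemma swap2 (n : ℕ) (f : ℕ → ℕ → ℚ) :
    ∑ k ∈ Icc 1 n, ∑ j ∈ Icc (k+1) n, f k j = ∑ j ∈ Icc 1 n, ∑ k ∈ Icc 1 (j-1), f k j :=
  Finset.sum_comm' (by intro x y; simp only [Finset.mem_Icc]; omega)

lemma L2 (n : ℕ) (g : ℕ → ℚ) :
    ∑ m ∈ Icc 1 n, 1/(m:ℚ)^2 * ∑ k ∈ Icc 1 m, g k * Aq m k
      = ∑ k ∈ Icc 1 n, g k * Aq n k / (k:ℚ)^2 := by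
  calc ∑ m ∈ Icc 1 n, 1/(m:ℚ)^2 * ∑ k ∈ Icc 1 m, g k * Aq m k
      = ∑ m ∈ Icc 1 n, ∑ k ∈ Icc 1 m, g k * (Aq m k/(m:ℚ)^2) := by
        refine Finset.sum_congr rfl fun m _ => ?_
        rw [Finset.mul_sum]
        exact Finset.sum_congr rfl fun k _ => by ring
    _ = ∑ k ∈ Icc 1 n, ∑ m ∈ Icc k n, g k * (Aq m k/(m:ℚ)^2) := swap1 n _
    _ = ∑ k ∈ Icc 1 n, g k * Aq n k / (k:ℚ)^2 := by
        refine Finset.sum_congr rfl fun k hk => ?_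
        rw [← Finset.mul_sum, K2 k (Finset.mem_Icc.1 hk).1 n]
        ring

lemma L1 (n : ℕ) (g : ℕ → ℚ) :
    ∑ m ∈ Icc 1 n, 1/(m:ℚ) * ∑ k ∈ Icc 1 m, g k * Aq m k
      = ∑ k ∈ Icc 1 n, g k * Aq n k / (k:ℚ)
        + 2*∑ k ∈ Icc 1 n, (∑ j ∈ Icc 1 (k-1), g j) * Aq n k / (k:ℚ) := by
  calc ∑ m ∈ Icc 1 n, 1/(m:ℚ) * ∑ k ∈ Icc 1 m, g k * Aq m k
      = ∑ m ∈ Icc 1 n, ∑ k ∈ Icc 1 m, g k * (Aq m k/(m:ℚ)) := by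
        refine Finset.sum_congr rfl fun m _ => ?_
        rw [Finset.mul_sum]
        exact Finset.sum_congr rfl fun k _ => by ring
    _ = ∑ k ∈ Icc 1 n, ∑ m ∈ Icc k n, g k * (Aq m k/(m:ℚ)) := swap1 n _
    _ = ∑ k ∈ Icc 1 n, (g k * Aq n k/(k:ℚ)
          + 2*∑ j ∈ Icc (k+1) n, g k * (Aq n j/(j:ℚ))) := by
        refine Finset.sum_congr rfl fun k hk => ?_
        rw [← Finset.mul_sum, K1 k (Finset.mem_Icc.1 hk).1 n, ← Finset.mul_sum]
        ring
    _ = ∑ k ∈ Icc 1 n, g k * Aq n k/(k:ℚ)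
          + 2*∑ k ∈ Icc 1 n, ∑ j ∈ Icc (k+1) n, g k * (Aq n j/(j:ℚ)) := by
        rw [Finset.sum_add_distrib, ← Finset.mul_sum]
    _ = ∑ k ∈ Icc 1 n, g k * Aq n k / (k:ℚ)
        + 2*∑ k ∈ Icc 1 n, (∑ j ∈ Icc 1 (k-1), g j) * Aq n k / (k:ℚ) := by
        rw [swap2 n]
        congr 1
        refine congrArg (2 * ·) (Finset.sum_congr rfl fun j _ => ?_)
        rw [Finset.sum_mul, Finset.sum_div]
        exact Finset.sum_congr rfl fun k _ => by ring

lemma L3 (n : ℕ) (g : ℕ → ℚ) :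
    ∑ m ∈ Icc 1 n, 1/(m:ℚ)^3 * ∑ k ∈ Icc 1 m, g k * Aq m k
      = ∑ k ∈ Icc 1 n, g k * Aq n k / (k:ℚ)^3
        + 2*∑ k ∈ Icc 1 n, (-1:ℚ)^k * (∑ j ∈ Icc 1 (k-1), (-1:ℚ)^j * g j / (j:ℚ))
            * Aq n k / (k:ℚ)^2 := by
  calc ∑ m ∈ Icc 1 n, 1/(m:ℚ)^3 * ∑ k ∈ Icc 1 m, g k * Aq m k
      = ∑ m ∈ Icc 1 n, ∑ k ∈ Icc 1 m, g k * (Aq m k/(m:ℚ)^3) := by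
        refine Finset.sum_congr rfl fun m _ => ?_
        rw [Finset.mul_sum]
        exact Finset.sum_congr rfl fun k _ => by ring
    _ = ∑ k ∈ Icc 1 n, ∑ m ∈ Icc k n, g k * (Aq m k/(m:ℚ)^3) := swap1 n _
    _ = ∑ k ∈ Icc 1 n, (g k * Aq n k/(k:ℚ)^3
          + 2*(((-1:ℚ)^k * g k/(k:ℚ))
            * ∑ j ∈ Icc (k+1) n, (-1:ℚ)^j * Aq n j/(j:ℚ)^2)) := by
        refine Finset.sum_congr rfl fun k hk => ?_
        rw [← Finset.mul_sum, K3 k (Finset.mem_Icc.1 hk).1 n]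
        ring
    _ = ∑ k ∈ Icc 1 n, g k * Aq n k/(k:ℚ)^3
          + 2*∑ k ∈ Icc 1 n, ∑ j ∈ Icc (k+1) n,
              ((-1:ℚ)^k * g k/(k:ℚ)) * ((-1:ℚ)^j * Aq n j/(j:ℚ)^2) := by
        rw [Finset.sum_add_distrib, ← Finset.mul_sum]
        congr 1
        refine congrArg (2 * ·) (Finset.sum_congr rfl fun k _ => ?_)
        exact Finset.mul_sum _ _ _
    _ = ∑ k ∈ Icc 1 n, g k * Aq n k / (k:ℚ)^3
        + 2*∑ k ∈ Icc 1 n, (-1:ℚ)^k * (∑ j ∈ Icc 1 (k-1), (-1:ℚ)^j * g j / (j:ℚ))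
            * Aq n k / (k:ℚ)^2 := by
        rw [swap2 n]
        congr 1
        refine congrArg (2 * ·) (Finset.sum_congr rfl fun j _ => ?_)
        rw [Finset.mul_sum, Finset.sum_mul, Finset.sum_div]
        exact Finset.sum_congr rfl fun k _ => by ring

lemma S1 (c : ℕ) : ∀ n, Hstar n (List.replicate c 2 ++ [1])
    = ∑ k ∈ Icc 1 n, (2/(k:ℚ)^(2*c+1)) * Aq n k := by
  induction c with
  | zero =>
    intro n
    rw [show (List.replicate 0 2 ++ [1] : List ℤ) = [(1:ℤ)] by simp, Hstar_one]
    calc ∑ m ∈ Icc 1 n, 1/(m:ℚ) * Hstar m [] = ∑ m ∈ Icc 1 n, 1/(m:ℚ) := by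
          simp [Hstar_nil]
      _ = 2*∑ j ∈ Icc 1 n, Aq n j/(j:ℚ) := B0 n
      _ = ∑ k ∈ Icc 1 n, (2/(k:ℚ)^(2*0+1)) * Aq n k := by
          rw [Finset.mul_sum]
          exact Finset.sum_congr rfl fun k _ => by ring
  | succ c ih =>
    intro n
    rw [show (List.replicate (c+1) 2 ++ [1] : List ℤ)
        = (2:ℤ) :: (List.replicate c 2 ++ [1]) by simp [List.replicate_succ], Hstar_two]
    calc ∑ m ∈ Icc 1 n, 1/(m:ℚ)^2 * Hstar m (List.replicate c 2 ++ [1])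
        = ∑ m ∈ Icc 1 n, 1/(m:ℚ)^2 * ∑ k ∈ Icc 1 m, (2/(k:ℚ)^(2*c+1)) * Aq m k :=
          Finset.sum_congr rfl fun m _ => by rw [ih m]
      _ = ∑ k ∈ Icc 1 n, (2/(k:ℚ)^(2*c+1)) * Aq n k / (k:ℚ)^2 := L2 n _
      _ = ∑ k ∈ Icc 1 n, (2/(k:ℚ)^(2*(c+1)+1)) * Aq n k := by
          refine Finset.sum_congr rfl fun k hk => ?_
          rw [show 2*(c+1)+1 = (2*c+1)+2 from by ring, pow_add]
          ring

lemma S2 (b c : ℕ) : ∀ n, Hstar n (List.replicate b 2 ++ (3:ℤ) :: (List.replicate c 2 ++ [1]))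
    = ∑ k ∈ Icc 1 n, (2/(k:ℚ)^(2*b+2*c+4)
        + 4*(-1:ℚ)^k * Hh (k-1) [-(2*(c:ℤ)+2)] / (k:ℚ)^(2*b+2)) * Aq n k := by
  have hinner : ∀ k:ℕ, ∑ j ∈ Icc 1 (k-1), (-1:ℚ)^j * (2/(j:ℚ)^(2*c+1))/(j:ℚ)
      = 2 * Hh (k-1) [-(2*(c:ℤ)+2)] := by
    intro k
    rw [show (-(2*(c:ℤ)+2)) = -((2*c+2 : ℕ) : ℤ) from by push_cast; ring,
      Hh_neg (k-1) (2*c+2) [], Finset.mul_sum]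
    refine Finset.sum_congr rfl fun j hj => ?_
    rw [Hh_nil, show 2*c+2 = (2*c+1)+1 from by ring, pow_add]
    ring
  induction b with
  | zero =>
    intro n
    rw [show (List.replicate 0 2 ++ (3:ℤ) :: (List.replicate c 2 ++ [1]))
        = (3:ℤ) :: (List.replicate c 2 ++ [1]) from by simp, Hstar_three]
    calc ∑ m ∈ Icc 1 n, 1/(m:ℚ)^3 * Hstar m (List.replicate c 2 ++ [1])
        = ∑ m ∈ Icc 1 n, 1/(m:ℚ)^3 * ∑ k ∈ Icc 1 m, (2/(k:ℚ)^(2*c+1)) * Aq m k :=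
          Finset.sum_congr rfl fun m _ => by rw [S1 c m]
      _ = ∑ k ∈ Icc 1 n, (2/(k:ℚ)^(2*c+1)) * Aq n k / (k:ℚ)^3
          + 2*∑ k ∈ Icc 1 n, (-1:ℚ)^k
              * (∑ j ∈ Icc 1 (k-1), (-1:ℚ)^j * (2/(j:ℚ)^(2*c+1)) / (j:ℚ))
              * Aq n k / (k:ℚ)^2 := L3 n _
      _ = ∑ k ∈ Icc 1 n, (2/(k:ℚ)^(2*0+2*c+4)) * Aq n k
          + ∑ k ∈ Icc 1 n, (4*(-1:ℚ)^k*Hh (k-1) [-(2*(c:ℤ)+2)]/(k:ℚ)^(2*0+2)) * Aq n k := by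
          congr 1
          · refine Finset.sum_congr rfl fun k hk => ?_
            rw [show 2*0+2*c+4 = (2*c+1)+3 from by ring, pow_add]
            ring
          · rw [Finset.mul_sum]
            refine Finset.sum_congr rfl fun k hk => ?_
            rw [hinner k]
            ring
      _ = ∑ k ∈ Icc 1 n, (2/(k:ℚ)^(2*0+2*c+4)
            + 4*(-1:ℚ)^k * Hh (k-1) [-(2*(c:ℤ)+2)] / (k:ℚ)^(2*0+2)) * Aq n k := by
          rw [← Finset.sum_add_distrib]
          exact Finset.sum_congr rfl fun k _ => by ring
  | succ b ih =>
    intro n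
    rw [show (List.replicate (b+1) 2 ++ (3:ℤ) :: (List.replicate c 2 ++ [1]))
        = (2:ℤ) :: (List.replicate b 2 ++ (3:ℤ) :: (List.replicate c 2 ++ [1]))
        from by simp [List.replicate_succ], Hstar_two]
    calc ∑ m ∈ Icc 1 n, 1/(m:ℚ)^2 * Hstar m (List.replicate b 2 ++ (3:ℤ) :: (List.replicate c 2 ++ [1]))
        = ∑ m ∈ Icc 1 n, 1/(m:ℚ)^2 * ∑ k ∈ Icc 1 m, (2/(k:ℚ)^(2*b+2*c+4)
            + 4*(-1:ℚ)^k * Hh (k-1) [-(2*(c:ℤ)+2)] / (k:ℚ)^(2*b+2)) * Aq m k :=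
          Finset.sum_congr rfl fun m _ => by rw [ih m]
      _ = ∑ k ∈ Icc 1 n, (2/(k:ℚ)^(2*b+2*c+4)
            + 4*(-1:ℚ)^k * Hh (k-1) [-(2*(c:ℤ)+2)] / (k:ℚ)^(2*b+2)) * Aq n k / (k:ℚ)^2 := L2 n _
      _ = ∑ k ∈ Icc 1 n, (2/(k:ℚ)^(2*(b+1)+2*c+4)
            + 4*(-1:ℚ)^k * Hh (k-1) [-(2*(c:ℤ)+2)] / (k:ℚ)^(2*(b+1)+2)) * Aq n k := by
          refine Finset.sum_congr rfl fun k hk => ?_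
          rw [show 2*(b+1)+2*c+4 = (2*b+2*c+4)+2 from by ring, pow_add,
            show 2*(b+1)+2 = (2*b+2)+2 from by ring, pow_add]
          ring

lemma S3 (a b c : ℕ) : ∀ n, Hstar n (List.replicate a 2
      ++ (1:ℤ) :: (List.replicate b 2 ++ (3:ℤ) :: (List.replicate c 2 ++ [1])))
    = ∑ k ∈ Icc 1 n, (2/(k:ℚ)^(2*a+2*b+2*c+5)
        + 4*Hh (k-1) [2*(b:ℤ)+2*(c:ℤ)+4]/(k:ℚ)^(2*a+1)
        + 4*(-1:ℚ)^k*Hh (k-1) [-(2*(c:ℤ)+2)]/(k:ℚ)^(2*a+2*b+3)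
        + 8*Hh (k-1) [-(2*(b:ℤ)+2), -(2*(c:ℤ)+2)]/(k:ℚ)^(2*a+1)) * Aq n k := by
  have hinner1 : ∀ k:ℕ, ∑ j ∈ Icc 1 (k-1), (2/(j:ℚ)^(2*b+2*c+4)
        + 4*(-1:ℚ)^j * Hh (j-1) [-(2*(c:ℤ)+2)] / (j:ℚ)^(2*b+2))
      = 2*Hh (k-1) [2*(b:ℤ)+2*(c:ℤ)+4] + 4*Hh (k-1) [-(2*(b:ℤ)+2), -(2*(c:ℤ)+2)] := by
    intro k
    rw [Finset.sum_add_distrib]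
    congr 1
    · rw [show (2*(b:ℤ)+2*(c:ℤ)+4) = ((2*b+2*c+4 : ℕ) : ℤ) from by push_cast; ring,
        Hh_pos (k-1) (2*b+2*c+4) (by omega) [], Finset.mul_sum]
      exact Finset.sum_congr rfl fun j _ => by rw [Hh_nil]; ring
    · rw [show (-(2*(b:ℤ)+2)) = -((2*b+2 : ℕ) : ℤ) from by push_cast; ring,
        Hh_neg (k-1) (2*b+2) [-(2*(c:ℤ)+2)], Finset.mul_sum]
      exact Finset.sum_congr rfl fun j _ => by ring
  induction a with
  | zero =>
    intro n
    rw [show (List.replicate 0 2 ++ (1:ℤ) :: (List.replicate b 2 ++ (3:ℤ) :: (List.replicate c 2 ++ [1])))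
        = (1:ℤ) :: (List.replicate b 2 ++ (3:ℤ) :: (List.replicate c 2 ++ [1])) from by simp,
      Hstar_one]
    calc ∑ m ∈ Icc 1 n, 1/(m:ℚ) * Hstar m (List.replicate b 2 ++ (3:ℤ) :: (List.replicate c 2 ++ [1]))
        = ∑ m ∈ Icc 1 n, 1/(m:ℚ) * ∑ k ∈ Icc 1 m, (2/(k:ℚ)^(2*b+2*c+4)
            + 4*(-1:ℚ)^k * Hh (k-1) [-(2*(c:ℤ)+2)] / (k:ℚ)^(2*b+2)) * Aq m k :=
          Finset.sum_congr rfl fun m _ => by rw [S2 b c m]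
      _ = ∑ k ∈ Icc 1 n, (2/(k:ℚ)^(2*b+2*c+4)
            + 4*(-1:ℚ)^k * Hh (k-1) [-(2*(c:ℤ)+2)] / (k:ℚ)^(2*b+2)) * Aq n k / (k:ℚ)
          + 2*∑ k ∈ Icc 1 n, (∑ j ∈ Icc 1 (k-1), (2/(j:ℚ)^(2*b+2*c+4)
            + 4*(-1:ℚ)^j * Hh (j-1) [-(2*(c:ℤ)+2)] / (j:ℚ)^(2*b+2))) * Aq n k / (k:ℚ) := L1 n _
      _ = ∑ k ∈ Icc 1 n, (2/(k:ℚ)^(2*0+2*b+2*c+5)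
            + 4*Hh (k-1) [2*(b:ℤ)+2*(c:ℤ)+4]/(k:ℚ)^(2*0+1)
            + 4*(-1:ℚ)^k*Hh (k-1) [-(2*(c:ℤ)+2)]/(k:ℚ)^(2*0+2*b+3)
            + 8*Hh (k-1) [-(2*(b:ℤ)+2), -(2*(c:ℤ)+2)]/(k:ℚ)^(2*0+1)) * Aq n k := by
          rw [Finset.mul_sum, ← Finset.sum_add_distrib]
          refine Finset.sum_congr rfl fun k hk => ?_
          rw [hinner1 k,
            show 2*0+2*b+2*c+5 = (2*b+2*c+4)+1 from by ring,
            show 2*0+2*b+3 = (2*b+2)+1 from by ring, pow_add, pow_add]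
          ring
  | succ a ih =>
    intro n
    rw [show (List.replicate (a+1) 2 ++ (1:ℤ) :: (List.replicate b 2 ++ (3:ℤ) :: (List.replicate c 2 ++ [1])))
        = (2:ℤ) :: (List.replicate a 2 ++ (1:ℤ) :: (List.replicate b 2 ++ (3:ℤ) :: (List.replicate c 2 ++ [1])))
        from by simp [List.replicate_succ], Hstar_two]
    calc ∑ m ∈ Icc 1 n, 1/(m:ℚ)^2 * Hstar m (List.replicate a 2
          ++ (1:ℤ) :: (List.replicate b 2 ++ (3:ℤ) :: (List.replicate c 2 ++ [1])))
        = ∑ m ∈ Icc 1 n, 1/(m:ℚ)^2 * ∑ k ∈ Icc 1 m, (2/(k:ℚ)^(2*a+2*b+2*c+5)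
            + 4*Hh (k-1) [2*(b:ℤ)+2*(c:ℤ)+4]/(k:ℚ)^(2*a+1)
            + 4*(-1:ℚ)^k*Hh (k-1) [-(2*(c:ℤ)+2)]/(k:ℚ)^(2*a+2*b+3)
            + 8*Hh (k-1) [-(2*(b:ℤ)+2), -(2*(c:ℤ)+2)]/(k:ℚ)^(2*a+1)) * Aq m k :=
          Finset.sum_congr rfl fun m _ => by rw [ih m]
      _ = ∑ k ∈ Icc 1 n, (2/(k:ℚ)^(2*a+2*b+2*c+5)
            + 4*Hh (k-1) [2*(b:ℤ)+2*(c:ℤ)+4]/(k:ℚ)^(2*a+1)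
            + 4*(-1:ℚ)^k*Hh (k-1) [-(2*(c:ℤ)+2)]/(k:ℚ)^(2*a+2*b+3)
            + 8*Hh (k-1) [-(2*(b:ℤ)+2), -(2*(c:ℤ)+2)]/(k:ℚ)^(2*a+1)) * Aq n k / (k:ℚ)^2 := L2 n _
      _ = ∑ k ∈ Icc 1 n, (2/(k:ℚ)^(2*(a+1)+2*b+2*c+5)
            + 4*Hh (k-1) [2*(b:ℤ)+2*(c:ℤ)+4]/(k:ℚ)^(2*(a+1)+1)
            + 4*(-1:ℚ)^k*Hh (k-1) [-(2*(c:ℤ)+2)]/(k:ℚ)^(2*(a+1)+2*b+3)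
            + 8*Hh (k-1) [-(2*(b:ℤ)+2), -(2*(c:ℤ)+2)]/(k:ℚ)^(2*(a+1)+1)) * Aq n k := by
          refine Finset.sum_congr rfl fun k hk => ?_
          rw [show 2*(a+1)+2*b+2*c+5 = (2*a+2*b+2*c+5)+2 from by ring,
            show 2*(a+1)+1 = (2*a+1)+2 from by ring,
            show 2*(a+1)+2*b+3 = (2*a+2*b+3)+2 from by ring,
            pow_add, pow_add, pow_add]
          ring

theorem stmt11 (n a1 b a2 : ℕ) (hn : 1 ≤ n) :
    Hstar n (List.replicate a1 2 ++ [1] ++ List.replicate b 2 ++ [3]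
              ++ List.replicate a2 2 ++ [1])
      = 2 * ∑ k ∈ Finset.Icc 1 n,
            (n.choose k : ℚ) / ((k : ℚ) ^ (2*(a1+b+a2)+5) * ((n+k).choose k))
        + 4 * ∑ k ∈ Finset.Icc 1 n,
            Hh (k-1) [2 * (b : ℤ) + 2 * (a2 : ℤ) + 4] * (n.choose k)
              / ((k : ℚ) ^ (2*a1+1) * ((n+k).choose k))
        + 4 * ∑ k ∈ Finset.Icc 1 n,
            (-1 : ℚ) ^ k * Hh (k-1) [-(2 * (a2 : ℤ) + 2)] * (n.choose k)
              / ((k : ℚ) ^ (2*a1+2*b+3) * ((n+k).choose k))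
        + 8 * ∑ k ∈ Finset.Icc 1 n,
            Hh (k-1) [-(2 * (b : ℤ) + 2), -(2 * (a2 : ℤ) + 2)] * (n.choose k)
              / ((k : ℚ) ^ (2*a1+1) * ((n+k).choose k)) := by
  have hl : (List.replicate a1 2 ++ [1] ++ List.replicate b 2 ++ [3]
        ++ List.replicate a2 2 ++ [1] : List ℤ)
      = List.replicate a1 2
          ++ (1:ℤ) :: (List.replicate b 2 ++ (3:ℤ) :: (List.replicate a2 2 ++ [1])) := by
    simp [List.append_assoc]
  rw [hl, S3 a1 b a2 n]
  have h1 : ∑ k ∈ Icc 1 n, (2/(k:ℚ)^(2*a1+2*b+2*a2+5)) * Aq n k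
      = 2 * ∑ k ∈ Finset.Icc 1 n,
          (n.choose k : ℚ) / ((k : ℚ) ^ (2*(a1+b+a2)+5) * ((n+k).choose k)) := by
    rw [Finset.mul_sum]
    refine Finset.sum_congr rfl fun k _ => ?_
    rw [Aq, show 2*(a1+b+a2)+5 = 2*a1+2*b+2*a2+5 from by ring]
    ring
  have h2 : ∑ k ∈ Icc 1 n, (4*Hh (k-1) [2*(b:ℤ)+2*(a2:ℤ)+4]/(k:ℚ)^(2*a1+1)) * Aq n k
      = 4 * ∑ k ∈ Finset.Icc 1 n,
          Hh (k-1) [2 * (b : ℤ) + 2 * (a2 : ℤ) + 4] * (n.choose k)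
            / ((k : ℚ) ^ (2*a1+1) * ((n+k).choose k)) := by
    rw [Finset.mul_sum]
    refine Finset.sum_congr rfl fun k _ => ?_
    rw [Aq]
    ring
  have h3 : ∑ k ∈ Icc 1 n, (4*(-1:ℚ)^k*Hh (k-1) [-(2*(a2:ℤ)+2)]/(k:ℚ)^(2*a1+2*b+3)) * Aq n k
      = 4 * ∑ k ∈ Finset.Icc 1 n,
          (-1 : ℚ) ^ k * Hh (k-1) [-(2 * (a2 : ℤ) + 2)] * (n.choose k)
            / ((k : ℚ) ^ (2*a1+2*b+3) * ((n+k).choose k)) := by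
    rw [Finset.mul_sum]
    refine Finset.sum_congr rfl fun k _ => ?_
    rw [Aq]
    ring
  have h4 : ∑ k ∈ Icc 1 n, (8*Hh (k-1) [-(2*(b:ℤ)+2), -(2*(a2:ℤ)+2)]/(k:ℚ)^(2*a1+1)) * Aq n k
      = 8 * ∑ k ∈ Finset.Icc 1 n,
          Hh (k-1) [-(2 * (b : ℤ) + 2), -(2 * (a2 : ℤ) + 2)] * (n.choose k)
            / ((k : ℚ) ^ (2*a1+1) * ((n+k).choose k)) := by
    rw [Finset.mul_sum]
    refine Finset.sum_congr rfl fun k _ => ?_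
    rw [Aq]
    ring
  rw [← h1, ← h2, ← h3, ← h4, ← Finset.sum_add_distrib, ← Finset.sum_add_distrib,
    ← Finset.sum_add_distrib]
  exact Finset.sum_congr rfl fun k _ => by ring
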